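/- Let λ be a solution of the generalized characteristic equation and suppose μ := sup_{t ≥ t₀} ∫_0^r θ·|exp(−∫_{t−θ}^t λ(s) ds)| d‖η(t)‖(θ) < 1. Let x be a solution of the RFDE x'(t) = ∫_0^r x(t−θ) dη(t)(θ), set y(t) = x(t)·exp(−∫_{t₀}^t λ(s) ds), and let M := max_{t ∈ [t₀, t₀+r]} |y'(t)|. Then |y'(t)| ≤ M·μ^{(t−t₀)/r − 1} for every t ≥ t₀. -/

import Mathlib

open MeasureTheory Filter Topology

/- Context: for each `t ≥ t₀`, the complex measure `η t` on `[0, r]` is given in polar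
form `dη(t) = h t dν(t)`, where `ν t` is a finite (nonnegative) measure supported on
`[0, r]` and `‖h t θ‖ = 1` for `ν t`-a.e. `θ`; its total variation measure is then
`‖η t‖ = ν t`.  A solution of the RFDE `x'(t) = ∫_0^r x(t-θ) dη(t)(θ)` is a continuous
function on `[t₀ - r, ∞)`, differentiable on `[t₀, ∞)` (right derivative at `t₀`),
satisfying the equation there; `λ` is a solution of the generalized characteristic
equation `λ(t) = ∫_0^r exp(-∫_{t-θ}^t λ(s) ds) dη(t)(θ)`. -/
set_option maxHeartbeats 1600000

theorem stmt6
    (r t₀ : ℝ) (hr : 0 < r)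
    (ν : ℝ → Measure ℝ)
    (hfin : ∀ t, t₀ ≤ t → IsFiniteMeasure (ν t))
    (hsupp : ∀ t, t₀ ≤ t → ν t (Set.Icc 0 r)ᶜ = 0)
    (h : ℝ → ℝ → ℂ)
    (hh : ∀ t, t₀ ≤ t → ∀ᵐ θ ∂(ν t), ‖h t θ‖ = 1)
    -- λ is a solution of the generalized characteristic equation
    (lam : ℝ → ℂ)
    (hlamc : ContinuousOn lam (Set.Ici (t₀ - r)))
    (hlamint : ∀ t, t₀ ≤ t → IntegrableOn
      (fun θ => Complex.exp (-(∫ s in (t - θ)..t, lam s)) * h t θ) (Set.Icc 0 r) (ν t))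
    (hlam : ∀ t, t₀ ≤ t →
      lam t = ∫ θ in Set.Icc 0 r, Complex.exp (-(∫ s in (t - θ)..t, lam s)) * h t θ ∂(ν t))
    -- μ = sup_{t ≥ t₀} ∫_0^r θ ‖exp(-∫_{t-θ}^t λ)‖ d‖η t‖(θ) < 1
    (μ : ℝ) (hμ0 : 0 ≤ μ) (hμ1 : μ < 1)
    (hμ : ∀ t, t₀ ≤ t → (∫ θ in Set.Icc 0 r,
      θ * ‖Complex.exp (-(∫ s in (t - θ)..t, lam s))‖ ∂(ν t)) ≤ μ)
    -- x is a solution of the RFDE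
    (x : ℝ → ℂ)
    (hxc : ContinuousOn x (Set.Ici (t₀ - r)))
    (hxint : ∀ t, t₀ ≤ t →
      IntegrableOn (fun θ => x (t - θ) * h t θ) (Set.Icc 0 r) (ν t))
    (hx : ∀ t, t₀ ≤ t → HasDerivWithinAt x
      (∫ θ in Set.Icc 0 r, x (t - θ) * h t θ ∂(ν t)) (Set.Ici t₀) t)
    -- y' is the derivative of y(t) = x(t)·exp(-∫_{t₀}^t λ(s) ds) on [t₀, ∞)
    (y' : ℝ → ℂ)
    (hy' : ∀ t, t₀ ≤ t → HasDerivWithinAt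
      (fun u => x u * Complex.exp (-(∫ s in t₀..u, lam s))) (y' t) (Set.Ici t₀) t)
    -- M = max_{t ∈ [t₀, t₀+r]} ‖y'(t)‖
    (M : ℝ)
    (hM : ∀ t ∈ Set.Icc t₀ (t₀ + r), ‖y' t‖ ≤ M) :
    ∀ t, t₀ ≤ t → ‖y' t‖ ≤ M * μ ^ ((t - t₀) / r - 1) := by
  classical
  have hrt : t₀ - r ≤ t₀ := by linarith
  -- a globally continuous modification of `lam`
  obtain ⟨lam2, hlam2def⟩ : ∃ lam2 : ℝ → ℂ, lam2 = fun u => lam (max (t₀ - r) u) := ⟨_, rfl⟩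
  have hlam2c : Continuous lam2 := by
    rw [hlam2def]
    exact hlamc.comp_continuous (continuous_const.max continuous_id)
      (fun u => Set.mem_Ici.mpr (le_max_left (t₀ - r) u))
  have hlam2eq : ∀ u, t₀ - r ≤ u → lam2 u = lam u := by
    intro u hu
    rw [hlam2def]
    simp only [max_eq_right hu]
  have hIcongr : ∀ a b : ℝ, t₀ - r ≤ a → t₀ - r ≤ b →
      (∫ s in a..b, lam s) = ∫ s in a..b, lam2 s := by
    intro a b ha hb
    refine intervalIntegral.integral_congr (fun s hs => ?_)
    rcases Set.mem_uIcc.mp hs with ⟨h1, _⟩ | ⟨h1, _⟩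
    · exact (hlam2eq s (le_trans ha h1)).symm
    · exact (hlam2eq s (le_trans hb h1)).symm
  -- the primitive of lam2 and its exponential
  have hFd : ∀ b : ℝ, HasDerivAt (fun u => ∫ s in t₀..u, lam2 s) (lam2 b) b := by
    intro b
    exact intervalIntegral.integral_hasDerivAt_right (hlam2c.intervalIntegrable _ _)
      (hlam2c.stronglyMeasurableAtFilter _ _) hlam2c.continuousAt
  have hFcont : Continuous (fun u => ∫ s in t₀..u, lam2 s) :=
    continuous_iff_continuousAt.mpr fun b => (hFd b).continuousAt
  have hEd : ∀ b : ℝ, HasDerivAt (fun u => Complex.exp (-(∫ s in t₀..u, lam2 s)))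
      (Complex.exp (-(∫ s in t₀..b, lam2 s)) * -lam2 b) b := fun b => ((hFd b).neg).cexp
  -- the function Y
  obtain ⟨Y, hYdef⟩ : ∃ Y : ℝ → ℂ,
      Y = fun u => x u * Complex.exp (-(∫ s in t₀..u, lam2 s)) := ⟨_, rfl⟩
  have hYcont : ContinuousOn Y (Set.Ici (t₀ - r)) := by
    rw [hYdef]
    exact hxc.mul (Complex.continuous_exp.comp hFcont.neg).continuousOn
  have hYeq : ∀ u, t₀ ≤ u → Y u = x u * Complex.exp (-(∫ s in t₀..u, lam s)) := by
    intro u hu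
    rw [hYdef, hIcongr t₀ u hrt (by linarith)]
  have hYd : ∀ t, t₀ ≤ t → HasDerivWithinAt Y (y' t) (Set.Ici t₀) t := by
    intro t ht
    exact (hy' t ht).congr (fun u hu => hYeq u hu) (hYeq t ht)
  -- uniqueness of the derivative
  have huniq : ∀ t, t₀ ≤ t →
      y' t = (∫ θ in Set.Icc 0 r, x (t - θ) * h t θ ∂ν t) *
          Complex.exp (-(∫ s in t₀..t, lam2 s)) +
        x t * (Complex.exp (-(∫ s in t₀..t, lam2 s)) * -lam2 t) := by
    intro t ht
    have h2 : HasDerivWithinAt Y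
        ((∫ θ in Set.Icc 0 r, x (t - θ) * h t θ ∂ν t) *
          Complex.exp (-(∫ s in t₀..t, lam2 s)) +
          x t * (Complex.exp (-(∫ s in t₀..t, lam2 s)) * -lam2 t)) (Set.Ici t₀) t := by
      rw [hYdef]
      exact (hx t ht).mul (hEd t).hasDerivWithinAt
    exact UniqueDiffWithinAt.eq_deriv _ (uniqueDiffOn_Ici t₀ t ht) (hYd t ht) h2
  -- splitting the exponential
  have hEsplit : ∀ t, t₀ ≤ t → ∀ θ ∈ Set.Icc (0:ℝ) r,
      Complex.exp (-(∫ s in t₀..(t - θ), lam2 s)) *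
        Complex.exp (-(∫ s in (t - θ)..t, lam s))
        = Complex.exp (-(∫ s in t₀..t, lam2 s)) := by
    intro t ht θ hθ
    have h1 : t₀ - r ≤ t - θ := by
      have := hθ.2; linarith
    rw [hIcongr (t - θ) t h1 (by linarith), ← Complex.exp_add]
    congr 1
    have hadd := intervalIntegral.integral_add_adjacent_intervals
      (a := t₀) (b := t - θ) (c := t) (μ := volume) (f := lam2)
      (hlam2c.intervalIntegrable _ _) (hlam2c.intervalIntegrable _ _)
    rw [← hadd]; ring
  -- the fundamental identity for y'
  have hID : ∀ t, t₀ ≤ t →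
      y' t = ∫ θ in Set.Icc 0 r,
        (Y (t - θ) - Y t) * Complex.exp (-(∫ s in (t - θ)..t, lam s)) * h t θ ∂ν t := by
    intro t ht
    have hint1 : IntegrableOn
        (fun θ => Complex.exp (-(∫ s in t₀..t, lam2 s)) * (x (t - θ) * h t θ))
        (Set.Icc 0 r) (ν t) := (hxint t ht).const_mul _
    have hint2 : IntegrableOn
        (fun θ => Y t * (Complex.exp (-(∫ s in (t - θ)..t, lam s)) * h t θ))
        (Set.Icc 0 r) (ν t) := (hlamint t ht).const_mul _
    have hcongr : Set.EqOn
        (fun θ => (Y (t - θ) - Y t) * Complex.exp (-(∫ s in (t - θ)..t, lam s)) * h t θ)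
        (fun θ => Complex.exp (-(∫ s in t₀..t, lam2 s)) * (x (t - θ) * h t θ) -
          Y t * (Complex.exp (-(∫ s in (t - θ)..t, lam s)) * h t θ))
        (Set.Icc 0 r) := by
      intro θ hθ
      have hsplit := hEsplit t ht θ hθ
      have hYv : Y (t - θ) = x (t - θ) * Complex.exp (-(∫ s in t₀..(t - θ), lam2 s)) := by
        rw [hYdef]
      simp only
      rw [hYv]
      linear_combination (x (t - θ) * h t θ) * hsplit
    rw [MeasureTheory.setIntegral_congr_fun measurableSet_Icc hcongr,
      MeasureTheory.integral_sub hint1 hint2,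
      MeasureTheory.integral_const_mul, MeasureTheory.integral_const_mul,
      ← hlam t ht, huniq t ht]
    have hYt : Y t = x t * Complex.exp (-(∫ s in t₀..t, lam2 s)) := by rw [hYdef]
    rw [hYt, hlam2eq t (by linarith)]
    ring
  -- positivity of the exponential weights
  have hepos : ∀ t θ : ℝ, 0 < ‖Complex.exp (-(∫ s in (t - θ)..t, lam s))‖ := by
    intro t θ
    exact norm_pos_iff.mpr (Complex.exp_ne_zero _)
  -- integrability of the weights
  have heint : ∀ t, t₀ ≤ t → IntegrableOn
      (fun θ => ‖Complex.exp (-(∫ s in (t - θ)..t, lam s))‖) (Set.Icc 0 r) (ν t) := by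
    intro t ht
    refine ((hlamint t ht).norm).congr ?_
    filter_upwards [ae_restrict_of_ae (hh t ht)] with θ hθ
    simp [norm_mul, hθ]
  have hteint : ∀ t, t₀ ≤ t → IntegrableOn
      (fun θ => θ * ‖Complex.exp (-(∫ s in (t - θ)..t, lam s))‖) (Set.Icc 0 r) (ν t) := by
    intro t ht
    refine (heint t ht).bdd_mul (c := r) aestronglyMeasurable_id ?_
    filter_upwards [ae_restrict_mem measurableSet_Icc] with θ hθ
    rw [Real.norm_eq_abs, abs_of_nonneg hθ.1]
    exact hθ.2
  -- the key pointwise estimate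
  have hKPL : ∀ t, t₀ ≤ t → ∀ G : ℝ, 0 ≤ G →
      (∀ θ ∈ Set.Icc (0:ℝ) r, ‖Y (t - θ) - Y t‖ ≤ θ * G) → ‖y' t‖ ≤ μ * G := by
    intro t ht G hG hbound
    rw [hID t ht]
    have step1 : ‖∫ θ in Set.Icc 0 r,
        (Y (t - θ) - Y t) * Complex.exp (-(∫ s in (t - θ)..t, lam s)) * h t θ ∂ν t‖
        ≤ ∫ θ in Set.Icc 0 r,
          ‖(Y (t - θ) - Y t) * Complex.exp (-(∫ s in (t - θ)..t, lam s)) * h t θ‖ ∂ν t :=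
      MeasureTheory.norm_integral_le_integral_norm _
    have step2 : (∫ θ in Set.Icc 0 r,
        ‖(Y (t - θ) - Y t) * Complex.exp (-(∫ s in (t - θ)..t, lam s)) * h t θ‖ ∂ν t)
        ≤ ∫ θ in Set.Icc 0 r,
          G * (θ * ‖Complex.exp (-(∫ s in (t - θ)..t, lam s))‖) ∂ν t := by
      refine MeasureTheory.integral_mono_of_nonneg
        (Filter.Eventually.of_forall fun θ => norm_nonneg _)
        ((hteint t ht).const_mul G) ?_
      filter_upwards [ae_restrict_mem measurableSet_Icc, ae_restrict_of_ae (hh t ht)]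
        with θ hθ hhθ
      simp only [norm_mul, hhθ, mul_one]
      have hb := hbound θ hθ
      have := mul_le_mul_of_nonneg_right hb
        (norm_nonneg (Complex.exp (-(∫ s in (t - θ)..t, lam s))))
      calc ‖Y (t - θ) - Y t‖ * ‖Complex.exp (-(∫ s in (t - θ)..t, lam s))‖
          ≤ (θ * G) * ‖Complex.exp (-(∫ s in (t - θ)..t, lam s))‖ := this
        _ = G * (θ * ‖Complex.exp (-(∫ s in (t - θ)..t, lam s))‖) := by ring
    have step3 : (∫ θ in Set.Icc 0 r,
        G * (θ * ‖Complex.exp (-(∫ s in (t - θ)..t, lam s))‖) ∂ν t)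
        = G * ∫ θ in Set.Icc 0 r,
          θ * ‖Complex.exp (-(∫ s in (t - θ)..t, lam s))‖ ∂ν t :=
      MeasureTheory.integral_const_mul G _
    have step4 : G * (∫ θ in Set.Icc 0 r,
        θ * ‖Complex.exp (-(∫ s in (t - θ)..t, lam s))‖ ∂ν t) ≤ G * μ :=
      mul_le_mul_of_nonneg_left (hμ t ht) hG
    calc ‖∫ θ in Set.Icc 0 r,
        (Y (t - θ) - Y t) * Complex.exp (-(∫ s in (t - θ)..t, lam s)) * h t θ ∂ν t‖
        ≤ ∫ θ in Set.Icc 0 r,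
          ‖(Y (t - θ) - Y t) * Complex.exp (-(∫ s in (t - θ)..t, lam s)) * h t θ‖ ∂ν t := step1
      _ ≤ ∫ θ in Set.Icc 0 r,
          G * (θ * ‖Complex.exp (-(∫ s in (t - θ)..t, lam s))‖) ∂ν t := step2
      _ = G * ∫ θ in Set.Icc 0 r,
          θ * ‖Complex.exp (-(∫ s in (t - θ)..t, lam s))‖ ∂ν t := step3
      _ ≤ G * μ := step4
      _ = μ * G := mul_comm _ _
  -- the mean value estimate
  have hMVT : ∀ a b C : ℝ, t₀ ≤ a → a ≤ b → (∀ s ∈ Set.Ico a b, ‖y' s‖ ≤ C) →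
      ‖Y b - Y a‖ ≤ C * (b - a) := by
    intro a b C ha hab hbound
    have h1 : ContinuousOn Y (Set.Icc a b) := by
      refine hYcont.mono (fun s hs => ?_)
      have := hs.1
      simp only [Set.mem_Ici]
      linarith
    have h2 : ∀ s ∈ Set.Ico a b, HasDerivWithinAt Y (y' s) (Set.Ici s) s := by
      intro s hs
      exact (hYd s (le_trans ha hs.1)).mono (Set.Ici_subset_Ici.mpr (le_trans ha hs.1))
    exact norm_image_sub_le_of_norm_deriv_right_le_segment h1 h2 hbound b
      (Set.right_mem_Icc.mpr hab)
  have hM0 : 0 ≤ M := le_trans (norm_nonneg _) (hM t₀ ⟨le_refl _, by linarith⟩)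
  -- the auxiliary contraction constant
  obtain ⟨μ₁, hμ₁def⟩ : ∃ μ₁ : ℝ, μ₁ = (1 + μ) / 2 := ⟨_, rfl⟩
  have hμ₁pos : 0 < μ₁ := by rw [hμ₁def]; linarith
  have hμμ₁ : μ < μ₁ := by rw [hμ₁def]; linarith
  have hμ₁1 : μ₁ < 1 := by rw [hμ₁def]; linarith
  -- points above the bound M are above t₀ + r
  have hgt : ∀ s, t₀ ≤ s → M < ‖y' s‖ → t₀ + r < s := by
    intro s hs hMs
    by_contra hle
    push_neg at hle
    exact absurd (hM s ⟨hs, hle⟩) (not_le.mpr hMs)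
  -- Phase 1 : global bound ‖y'‖ ≤ M
  have phase1 : ∀ t, t₀ ≤ t → ‖y' t‖ ≤ M := by
    by_contra hcon
    push_neg at hcon
    obtain ⟨t1, ht1, hMt1⟩ := hcon
    have step : ∀ s, t₀ ≤ s → M < ‖y' s‖ → ∃ s' θ : ℝ, 0 < θ ∧ θ ≤ r ∧ s - θ ≤ s' ∧
        s' < s ∧ θ * (‖y' s‖ / μ₁) < ‖Y (s - θ) - Y s‖ ∧ ‖y' s‖ / μ₁ < ‖y' s'‖ := by
      intro s hs hMs
      have hus : 0 < ‖y' s‖ := lt_of_le_of_lt hM0 hMs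
      have hsr : t₀ + r < s := hgt s hs hMs
      have hex1 : ∃ θ ∈ Set.Icc (0:ℝ) r, θ * (‖y' s‖ / μ₁) < ‖Y (s - θ) - Y s‖ := by
        by_contra hc
        push_neg at hc
        have hk := hKPL s hs (‖y' s‖ / μ₁) (by positivity) hc
        have h2 : μ * (‖y' s‖ / μ₁) < μ₁ * (‖y' s‖ / μ₁) :=
          mul_lt_mul_of_pos_right hμμ₁ (by positivity)
        rw [mul_div_cancel₀ _ (ne_of_gt hμ₁pos)] at h2
        linarith
      obtain ⟨θ, hθmem, hclimb⟩ := hex1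
      have hθpos : 0 < θ := by
        rcases lt_or_eq_of_le hθmem.1 with hlt | heq
        · exact hlt
        · exfalso
          rw [← heq] at hclimb
          simp at hclimb
      have hex2 : ∃ s' ∈ Set.Ico (s - θ) s, ‖y' s‖ / μ₁ < ‖y' s'‖ := by
        by_contra hc
        push_neg at hc
        have hm := hMVT (s - θ) s (‖y' s‖ / μ₁) (by linarith [hθmem.2]) (by linarith) hc
        rw [norm_sub_rev] at hm
        have h2 : s - (s - θ) = θ := by ring
        rw [h2] at hm
        nlinarith
      obtain ⟨s', hs'mem, hs'⟩ := hex2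
      exact ⟨s', θ, hθpos, hθmem.2, hs'mem.1, hs'mem.2, hclimb, hs'⟩
    choose! f1 f2 hp1 hp2 hp3 hp4 hp5 hp6 using step
    obtain ⟨seq, hseq0, hseqS⟩ : ∃ seq : ℕ → ℝ, seq 0 = t1 ∧ ∀ k, seq (k+1) = f1 (seq k) :=
      ⟨fun k => Nat.rec t1 (fun _ s => f1 s) k, rfl, fun k => rfl⟩
    have hinv : ∀ k, t₀ ≤ seq k ∧ M < ‖y' (seq k)‖ := by
      intro k
      induction k with
      | zero => rw [hseq0]; exact ⟨ht1, hMt1⟩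
      | succ n ih =>
        obtain ⟨h1, h2⟩ := ih
        have hu : 0 < ‖y' (seq n)‖ := lt_of_le_of_lt hM0 h2
        have hdivge : ‖y' (seq n)‖ ≤ ‖y' (seq n)‖ / μ₁ := by
          rw [le_div_iff₀ hμ₁pos]
          nlinarith
        have hsr : t₀ + r < seq n := hgt _ h1 h2
        have h3 := hp3 _ h1 h2
        have hθr := hp2 _ h1 h2
        have hgrow := hp6 _ h1 h2
        constructor
        · rw [hseqS]; linarith
        · rw [hseqS]; linarith
    have hlow : ∀ k, t₀ + r < seq k := fun k => hgt _ (hinv k).1 (hinv k).2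
    have hupos : ∀ k, 0 < ‖y' (seq k)‖ := fun k => lt_of_le_of_lt hM0 (hinv k).2
    have hdec : ∀ k, seq (k+1) < seq k := fun k => by
      rw [hseqS]; exact hp4 _ (hinv k).1 (hinv k).2
    have hθpos : ∀ k, 0 < f2 (seq k) := fun k => hp1 _ (hinv k).1 (hinv k).2
    have hθr : ∀ k, f2 (seq k) ≤ r := fun k => hp2 _ (hinv k).1 (hinv k).2
    have hstepge : ∀ k, seq k - f2 (seq k) ≤ seq (k+1) := fun k => by
      rw [hseqS]; exact hp3 _ (hinv k).1 (hinv k).2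
    have hclimb : ∀ k, f2 (seq k) * (‖y' (seq k)‖ / μ₁) <
        ‖Y (seq k - f2 (seq k)) - Y (seq k)‖ := fun k => hp5 _ (hinv k).1 (hinv k).2
    have hgrow : ∀ k, ‖y' (seq k)‖ / μ₁ < ‖y' (seq (k+1))‖ := fun k => by
      rw [hseqS]; exact hp6 _ (hinv k).1 (hinv k).2
    have hanti : Antitone seq := antitone_nat_of_succ_le (fun k => (hdec k).le)
    have hbdd : BddBelow (Set.range seq) := by
      refine ⟨t₀ + r, fun z hz => ?_⟩
      obtain ⟨k, rfl⟩ := hz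
      exact (hlow k).le
    obtain ⟨sh, hshdef⟩ : ∃ sh : ℝ, sh = ⨅ k, seq k := ⟨_, rfl⟩
    have hsh_le : ∀ k, sh ≤ seq k := fun k => by rw [hshdef]; exact ciInf_le hbdd k
    have hsh_ge : t₀ + r ≤ sh := by
      rw [hshdef]; exact le_ciInf fun k => (hlow k).le
    have htends : Filter.Tendsto seq Filter.atTop (𝓝 sh) := by
      rw [hshdef]; exact tendsto_atTop_ciInf hanti hbdd
    have hsh_lt : ∀ k, sh < seq k := fun k => lt_of_le_of_lt (hsh_le (k+1)) (hdec k)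
    have hsht : t₀ < sh := by linarith
    have hYsh : HasDerivAt Y (y' sh) sh :=
      (hYd sh hsht.le).hasDerivAt (Ici_mem_nhds hsht)
    obtain ⟨K, hKdef⟩ : ∃ K : ℝ, K = ‖y' sh‖ + 1 := ⟨_, rfl⟩
    have hKpos : 0 < K := by rw [hKdef]; positivity
    obtain ⟨δ, hδpos, hδ⟩ : ∃ δ > 0, ∀ a : ℝ, |a - sh| < δ → ‖Y a - Y sh‖ ≤ K * |a - sh| := by
      have hlo := hasDerivAt_iff_isLittleO.mp hYsh
      have hev := (Asymptotics.isLittleO_iff.mp hlo) (c := 1) one_pos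
      rw [Metric.eventually_nhds_iff] at hev
      obtain ⟨δ, hδpos, hδ⟩ := hev
      refine ⟨δ, hδpos, fun a ha => ?_⟩
      have h2 := hδ (y := a) (by rwa [Real.dist_eq])
      have h3 := norm_add_le (Y a - Y sh - (a - sh) • y' sh) ((a - sh) • y' sh)
      simp only [sub_add_cancel] at h3
      rw [norm_smul, Real.norm_eq_abs] at h3
      rw [Real.norm_eq_abs] at h2
      calc ‖Y a - Y sh‖ ≤ 1 * |a - sh| + |a - sh| * ‖y' sh‖ := by linarith
        _ = K * |a - sh| := by rw [hKdef]; ring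
    obtain ⟨Yb, hYb⟩ : ∃ C, ∀ z ∈ Set.Icc (t₀ - r) (seq 0), ‖Y z‖ ≤ C :=
      isCompact_Icc.exists_bound_of_continuousOn (hYcont.mono (fun z hz => hz.1))
    have hmem : ∀ k, seq k ∈ Set.Icc (t₀ - r) (seq 0) := fun k =>
      ⟨by linarith [hlow k], hanti (Nat.zero_le k)⟩
    have hmemL : ∀ k, seq k - f2 (seq k) ∈ Set.Icc (t₀ - r) (seq 0) := fun k =>
      ⟨by linarith [hlow k, hθr k], by linarith [hanti (Nat.zero_le k), hθpos k]⟩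
    have hθbd : ∀ k, f2 (seq k) * ‖y' (seq k)‖ < (2 * Yb) * μ₁ := by
      intro k
      have h1 : ‖Y (seq k - f2 (seq k)) - Y (seq k)‖ ≤ 2 * Yb := by
        calc ‖Y (seq k - f2 (seq k)) - Y (seq k)‖
            ≤ ‖Y (seq k - f2 (seq k))‖ + ‖Y (seq k)‖ := norm_sub_le _ _
          _ ≤ Yb + Yb := add_le_add (hYb _ (hmemL k)) (hYb _ (hmem k))
          _ = 2 * Yb := by ring
      have h2 := hclimb k
      have h3 : f2 (seq k) * (‖y' (seq k)‖ / μ₁) < 2 * Yb := lt_of_lt_of_le h2 h1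
      have h4 := mul_lt_mul_of_pos_right h3 hμ₁pos
      calc f2 (seq k) * ‖y' (seq k)‖
          = (f2 (seq k) * (‖y' (seq k)‖ / μ₁)) * μ₁ := by field_simp
        _ < (2 * Yb) * μ₁ := h4
    have hmono_u : ∀ k j, ‖y' (seq k)‖ * μ₁⁻¹ ^ j ≤ ‖y' (seq (k + j))‖ := by
      intro k j
      induction j with
      | zero => simp
      | succ n ih =>
        have hg := hgrow (k + n)
        have h2 : ‖y' (seq (k + n))‖ / μ₁ = ‖y' (seq (k + n))‖ * μ₁⁻¹ := div_eq_mul_inv _ _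
        have h3 : ‖y' (seq k)‖ * μ₁⁻¹ ^ (n + 1)
            = (‖y' (seq k)‖ * μ₁⁻¹ ^ n) * μ₁⁻¹ := by ring
        have h4 : (‖y' (seq k)‖ * μ₁⁻¹ ^ n) * μ₁⁻¹ ≤ ‖y' (seq (k + n))‖ * μ₁⁻¹ :=
          mul_le_mul_of_nonneg_right ih (inv_nonneg.mpr hμ₁pos.le)
      -- seq (k + (n+1)) = seq ((k+n)+1)
        have h5 : k + (n + 1) = (k + n) + 1 := rfl
        rw [h3, h5]
        rw [h2] at hg
        linarith
    have hone_lt : 1 < μ₁⁻¹ := (one_lt_inv₀ hμ₁pos).mpr hμ₁1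
    have hu_ge : ∀ k j, ‖y' (seq k)‖ ≤ ‖y' (seq (k + j))‖ := by
      intro k j
      have h1 : (1:ℝ) ≤ μ₁⁻¹ ^ j := one_le_pow₀ hone_lt.le
      have h2 : ‖y' (seq k)‖ ≤ ‖y' (seq k)‖ * μ₁⁻¹ ^ j := by
        nlinarith [hupos k]
      exact le_trans h2 (hmono_u k j)
    -- choose k₀
    obtain ⟨T, hTdef⟩ : ∃ T : ℝ,
        T = max (2 * μ₁ * K) (max (4 * μ₁ * K / (1 - μ₁)) ((2 * Yb) * μ₁ / δ)) := ⟨_, rfl⟩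
    have hT1 : 2 * μ₁ * K ≤ T := by rw [hTdef]; exact le_max_left _ _
    have hT2 : 4 * μ₁ * K / (1 - μ₁) ≤ T := by
      rw [hTdef]; exact le_trans (le_max_left _ _) (le_max_right _ _)
    have hT3 : (2 * Yb) * μ₁ / δ ≤ T := by
      rw [hTdef]; exact le_trans (le_max_right _ _) (le_max_right _ _)
    obtain ⟨k₁, hk₁⟩ : ∃ k₁, seq k₁ - sh < δ := by
      have h1 := Metric.tendsto_atTop.mp htends δ hδpos
      obtain ⟨N, hN⟩ := h1
      refine ⟨N, ?_⟩
      have h2 := hN N le_rfl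
      rw [Real.dist_eq, abs_of_nonneg (by linarith [hsh_le N])] at h2
      exact h2
    obtain ⟨j₁, hj₁⟩ : ∃ j, T < ‖y' (seq k₁)‖ * μ₁⁻¹ ^ j := by
      obtain ⟨n, hn⟩ := pow_unbounded_of_one_lt (T / ‖y' (seq k₁)‖) hone_lt
      refine ⟨n, ?_⟩
      rw [div_lt_iff₀ (hupos k₁)] at hn
      calc T < μ₁⁻¹ ^ n * ‖y' (seq k₁)‖ := hn
        _ = ‖y' (seq k₁)‖ * μ₁⁻¹ ^ n := mul_comm _ _
    obtain ⟨k₀, hk₀def⟩ : ∃ k₀ : ℕ, k₀ = k₁ + j₁ := ⟨_, rfl⟩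
    have hTk₀ : T < ‖y' (seq k₀)‖ := by
      rw [hk₀def]; exact lt_of_lt_of_le hj₁ (hmono_u k₁ j₁)
    have hTle : ∀ j, T < ‖y' (seq (k₀ + j))‖ := fun j =>
      lt_of_lt_of_le hTk₀ (hu_ge k₀ j)
    obtain ⟨D, hDdef⟩ : ∃ D : ℝ, D = seq k₀ - sh := ⟨_, rfl⟩
    have hDpos : 0 < D := by rw [hDdef]; exact sub_pos.mpr (hsh_lt k₀)
    have hDδ : D < δ := by
      have h1 : seq k₀ ≤ seq k₁ := by rw [hk₀def]; exact hanti (Nat.le_add_right _ _)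
      rw [hDdef]; linarith
    -- Yb is positive
    have hYbpos : 0 < 2 * Yb := by
      have h1 := hθbd 0
      have h2 : 0 < f2 (seq 0) * ‖y' (seq 0)‖ := mul_pos (hθpos 0) (hupos 0)
      have h3 : 0 < (2 * Yb) * μ₁ := lt_trans h2 h1
      by_contra hc
      push_neg at hc
      nlinarith
    have hTpos : 0 < T := by
      have : 0 < 2 * μ₁ * K := by positivity
      linarith
    -- the key per-index bound
    have hkey : ∀ j, f2 (seq (k₀ + j)) * ‖y' (seq (k₀ + j))‖ ≤ 4 * μ₁ * K * D := by
      intro j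
      have hu : T < ‖y' (seq (k₀ + j))‖ := hTle j
      have hupos' : 0 < ‖y' (seq (k₀ + j))‖ := hupos _
      have hDj : 0 < seq (k₀ + j) - sh := sub_pos.mpr (hsh_lt _)
      have hDjD : seq (k₀ + j) - sh ≤ D := by
        have h1 : seq (k₀ + j) ≤ seq k₀ := hanti (Nat.le_add_right _ _)
        rw [hDdef]; linarith
      have hθδ : f2 (seq (k₀ + j)) < δ := by
        have h1 := hθbd (k₀ + j)
        have h3 : (2 * Yb) * μ₁ / δ < ‖y' (seq (k₀ + j))‖ := lt_of_le_of_lt hT3 hu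
        rw [div_lt_iff₀ hδpos] at h3
        have h4 : f2 (seq (k₀ + j)) * ‖y' (seq (k₀ + j))‖
            < δ * ‖y' (seq (k₀ + j))‖ := by
          calc f2 (seq (k₀ + j)) * ‖y' (seq (k₀ + j))‖ < (2 * Yb) * μ₁ := h1
            _ < ‖y' (seq (k₀ + j))‖ * δ := h3
            _ = δ * ‖y' (seq (k₀ + j))‖ := mul_comm _ _
        exact lt_of_mul_lt_mul_right h4 hupos'.le
      have hwin1 : |seq (k₀ + j) - sh| < δ := by
        rw [abs_of_pos hDj]; linarith
      have hwin2 : |seq (k₀ + j) - f2 (seq (k₀ + j)) - sh| < δ := by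
        rw [abs_lt]
        constructor
        · linarith [hθpos (k₀ + j)]
        · linarith [hθpos (k₀ + j)]
      have hcl := hclimb (k₀ + j)
      have hb1 := hδ _ hwin2
      have hb2 := hδ _ hwin1
      have hb3 : ‖Y (seq (k₀ + j) - f2 (seq (k₀ + j))) - Y (seq (k₀ + j))‖
          ≤ K * |seq (k₀ + j) - f2 (seq (k₀ + j)) - sh| + K * |seq (k₀ + j) - sh| := by
        have h4 := norm_add_le (Y (seq (k₀ + j) - f2 (seq (k₀ + j))) - Y sh)
          (Y sh - Y (seq (k₀ + j)))
        have h5 : Y (seq (k₀ + j) - f2 (seq (k₀ + j))) - Y sh + (Y sh - Y (seq (k₀ + j)))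
            = Y (seq (k₀ + j) - f2 (seq (k₀ + j))) - Y (seq (k₀ + j)) := by ring
        rw [h5] at h4
        have h6 : ‖Y sh - Y (seq (k₀ + j))‖ = ‖Y (seq (k₀ + j)) - Y sh‖ := norm_sub_rev _ _
        rw [h6] at h4
        linarith
      have habs1 : |seq (k₀ + j) - f2 (seq (k₀ + j)) - sh|
          ≤ (seq (k₀ + j) - sh) + f2 (seq (k₀ + j)) := by
        rw [abs_le]
        constructor
        · linarith [hθpos (k₀ + j)]
        · linarith [hθpos (k₀ + j)]
      have habs2 : |seq (k₀ + j) - sh| = seq (k₀ + j) - sh := abs_of_pos hDj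
      have hineq : f2 (seq (k₀ + j)) * (‖y' (seq (k₀ + j))‖ / μ₁)
          < K * (2 * (seq (k₀ + j) - sh) + f2 (seq (k₀ + j))) := by
        have h7 : K * |seq (k₀ + j) - f2 (seq (k₀ + j)) - sh|
            ≤ K * ((seq (k₀ + j) - sh) + f2 (seq (k₀ + j))) :=
          mul_le_mul_of_nonneg_left habs1 hKpos.le
        rw [habs2] at hb3
        calc f2 (seq (k₀ + j)) * (‖y' (seq (k₀ + j))‖ / μ₁)
            < ‖Y (seq (k₀ + j) - f2 (seq (k₀ + j))) - Y (seq (k₀ + j))‖ := hcl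
          _ ≤ K * |seq (k₀ + j) - f2 (seq (k₀ + j)) - sh| + K * (seq (k₀ + j) - sh) := hb3
          _ ≤ K * ((seq (k₀ + j) - sh) + f2 (seq (k₀ + j))) + K * (seq (k₀ + j) - sh) := by
              linarith
          _ = K * (2 * (seq (k₀ + j) - sh) + f2 (seq (k₀ + j))) := by ring
      -- use u ≥ 2 μ₁ K
      have h2μK : 2 * μ₁ * K ≤ ‖y' (seq (k₀ + j))‖ := le_trans hT1 hu.le
      -- θ * (u/μ₁ - K) < 2 K Dj, and u/μ₁ - K ≥ u/(2μ₁)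
      have hhalf : K ≤ ‖y' (seq (k₀ + j))‖ / (2 * μ₁) := by
        rw [le_div_iff₀ (by positivity)]
        linarith [h2μK]
      have hdivsplit : ‖y' (seq (k₀ + j))‖ / μ₁
          = ‖y' (seq (k₀ + j))‖ / (2 * μ₁) + ‖y' (seq (k₀ + j))‖ / (2 * μ₁) := by
        field_simp
        ring
      have h8 : f2 (seq (k₀ + j)) * (‖y' (seq (k₀ + j))‖ / (2 * μ₁))
          < K * (2 * (seq (k₀ + j) - sh)) := by
        have h7b : f2 (seq (k₀ + j)) * K
            ≤ f2 (seq (k₀ + j)) * (‖y' (seq (k₀ + j))‖ / (2 * μ₁)) :=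
          mul_le_mul_of_nonneg_left hhalf (hθpos (k₀ + j)).le
        have h7c : f2 (seq (k₀ + j)) * (‖y' (seq (k₀ + j))‖ / μ₁)
            = f2 (seq (k₀ + j)) * (‖y' (seq (k₀ + j))‖ / (2 * μ₁))
              + f2 (seq (k₀ + j)) * (‖y' (seq (k₀ + j))‖ / (2 * μ₁)) := by
          rw [hdivsplit]; ring
        linarith
      have h9 : f2 (seq (k₀ + j)) * ‖y' (seq (k₀ + j))‖
          < 4 * μ₁ * K * (seq (k₀ + j) - sh) := by
        have h10 := mul_lt_mul_of_pos_right h8 (show (0:ℝ) < 2 * μ₁ by positivity)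
        have h11 : f2 (seq (k₀ + j)) * (‖y' (seq (k₀ + j))‖ / (2 * μ₁)) * (2 * μ₁)
            = f2 (seq (k₀ + j)) * ‖y' (seq (k₀ + j))‖ := by
          field_simp
        rw [h11] at h10
        calc f2 (seq (k₀ + j)) * ‖y' (seq (k₀ + j))‖
            < K * (2 * (seq (k₀ + j) - sh)) * (2 * μ₁) := h10
          _ = 4 * μ₁ * K * (seq (k₀ + j) - sh) := by ring
      have h12 : 4 * μ₁ * K * (seq (k₀ + j) - sh) ≤ 4 * μ₁ * K * D := by
        apply mul_le_mul_of_nonneg_left hDjD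
        positivity
      linarith
    -- telescoping
    have hgeo : ∀ m, ∑ j ∈ Finset.range m, μ₁ ^ j ≤ (1 - μ₁)⁻¹ := by
      intro m
      have hs : Summable (fun j : ℕ => μ₁ ^ j) := summable_geometric_of_lt_one hμ₁pos.le hμ₁1
      calc ∑ j ∈ Finset.range m, μ₁ ^ j ≤ ∑' j : ℕ, μ₁ ^ j :=
            Summable.sum_le_tsum _ (fun i _ => (pow_pos hμ₁pos i).le) hs
        _ = (1 - μ₁)⁻¹ := tsum_geometric_of_lt_one hμ₁pos.le hμ₁1
    have hterm : ∀ j, seq (k₀ + j) - seq (k₀ + j + 1)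
        ≤ (4 * μ₁ * K * D / ‖y' (seq k₀)‖) * μ₁ ^ j := by
      intro j
      have h1 : seq (k₀ + j) - seq (k₀ + j + 1) ≤ f2 (seq (k₀ + j)) := by
        linarith [hstepge (k₀ + j)]
      have h2 := hkey j
      have h3 := hmono_u k₀ j
      have hupos' : 0 < ‖y' (seq (k₀ + j))‖ := hupos _
      have huk₀ : 0 < ‖y' (seq k₀)‖ := hupos _
      -- f2 ≤ 4μ₁KD/u_j ≤ (4μ₁KD/u₀) μ₁^j
      have h4 : f2 (seq (k₀ + j)) ≤ 4 * μ₁ * K * D / ‖y' (seq (k₀ + j))‖ := by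
        rw [le_div_iff₀ hupos']
        exact h2
      have h5 : 4 * μ₁ * K * D / ‖y' (seq (k₀ + j))‖
          ≤ (4 * μ₁ * K * D / ‖y' (seq k₀)‖) * μ₁ ^ j := by
        rw [div_le_iff₀ hupos']
        have hc : (0:ℝ) ≤ 4 * μ₁ * K * D / ‖y' (seq k₀)‖ * μ₁ ^ j := by positivity
        have h6 : (4 * μ₁ * K * D / ‖y' (seq k₀)‖) * μ₁ ^ j * (‖y' (seq k₀)‖ * μ₁⁻¹ ^ j)
            ≤ (4 * μ₁ * K * D / ‖y' (seq k₀)‖) * μ₁ ^ j * ‖y' (seq (k₀ + j))‖ :=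
          mul_le_mul_of_nonneg_left h3 hc
        have h7 : (4 * μ₁ * K * D / ‖y' (seq k₀)‖) * μ₁ ^ j * (‖y' (seq k₀)‖ * μ₁⁻¹ ^ j)
            = 4 * μ₁ * K * D := by
          have hne1 : ‖y' (seq k₀)‖ ≠ 0 := (hupos k₀).ne'
          have hppow : μ₁ ^ j * μ₁⁻¹ ^ j = 1 := by
            rw [← mul_pow, mul_inv_cancel₀ hμ₁pos.ne', one_pow]
          calc (4 * μ₁ * K * D / ‖y' (seq k₀)‖) * μ₁ ^ j * (‖y' (seq k₀)‖ * μ₁⁻¹ ^ j)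
              = (4 * μ₁ * K * D / ‖y' (seq k₀)‖) * ‖y' (seq k₀)‖ * (μ₁ ^ j * μ₁⁻¹ ^ j) := by
                ring
            _ = (4 * μ₁ * K * D / ‖y' (seq k₀)‖) * ‖y' (seq k₀)‖ := by
                rw [hppow, mul_one]
            _ = 4 * μ₁ * K * D := div_mul_cancel₀ _ hne1
        linarith
      linarith
    have hsum : ∀ m, seq k₀ - seq (k₀ + m)
        ≤ (4 * μ₁ * K * D / ‖y' (seq k₀)‖) * (1 - μ₁)⁻¹ := by
      intro m
      have htel : seq k₀ - seq (k₀ + m)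
          = ∑ j ∈ Finset.range m, (seq (k₀ + j) - seq (k₀ + j + 1)) :=
        (Finset.sum_range_sub' (fun j => seq (k₀ + j)) m).symm
      have hC : (0:ℝ) ≤ 4 * μ₁ * K * D / ‖y' (seq k₀)‖ := by
        have := hupos k₀; positivity
      calc seq k₀ - seq (k₀ + m)
          = ∑ j ∈ Finset.range m, (seq (k₀ + j) - seq (k₀ + j + 1)) := htel
        _ ≤ ∑ j ∈ Finset.range m, (4 * μ₁ * K * D / ‖y' (seq k₀)‖) * μ₁ ^ j :=
            Finset.sum_le_sum (fun j _ => hterm j)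
        _ = (4 * μ₁ * K * D / ‖y' (seq k₀)‖) * ∑ j ∈ Finset.range m, μ₁ ^ j := by
            rw [Finset.mul_sum]
        _ ≤ (4 * μ₁ * K * D / ‖y' (seq k₀)‖) * (1 - μ₁)⁻¹ :=
            mul_le_mul_of_nonneg_left (hgeo m) hC
    have hlim : Filter.Tendsto (fun m => seq (k₀ + m)) Filter.atTop (𝓝 sh) := by
      have h1 : Filter.Tendsto (fun m : ℕ => k₀ + m) Filter.atTop Filter.atTop := by
        have := Filter.tendsto_add_atTop_nat k₀
        have h2 : (fun m : ℕ => k₀ + m) = fun m : ℕ => m + k₀ := by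
          funext m; omega
        rw [h2]
        exact this
      exact htends.comp h1
    have hfin0 : ∀ m, seq k₀ - (4 * μ₁ * K * D / ‖y' (seq k₀)‖) * (1 - μ₁)⁻¹
        ≤ seq (k₀ + m) := fun m => by linarith [hsum m]
    have hfin : seq k₀ - (4 * μ₁ * K * D / ‖y' (seq k₀)‖) * (1 - μ₁)⁻¹ ≤ sh :=
      ge_of_tendsto hlim (Filter.Eventually.of_forall hfin0)
    -- final contradiction
    have hfin2 : D ≤ (4 * μ₁ * K * D / ‖y' (seq k₀)‖) * (1 - μ₁)⁻¹ := by
      have hD2 : seq k₀ - sh = D := by rw [hDdef]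
      linarith
    have hlt : (4 * μ₁ * K * D / ‖y' (seq k₀)‖) * (1 - μ₁)⁻¹ < D := by
      have huk₀ : 0 < ‖y' (seq k₀)‖ := hupos _
      have h1μ : 0 < 1 - μ₁ := by linarith
      have h2 : 4 * μ₁ * K < ‖y' (seq k₀)‖ * (1 - μ₁) := by
        have h3 : 4 * μ₁ * K / (1 - μ₁) < ‖y' (seq k₀)‖ := lt_of_le_of_lt hT2 hTk₀
        rw [div_lt_iff₀ h1μ] at h3
        linarith
      have hP : 0 < ‖y' (seq k₀)‖ * (1 - μ₁) := by positivity
      have h4 : (4 * μ₁ * K * D / ‖y' (seq k₀)‖) * (1 - μ₁)⁻¹ * (‖y' (seq k₀)‖ * (1 - μ₁))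
          = (4 * μ₁ * K) * D := by
        have hne1 : ‖y' (seq k₀)‖ ≠ 0 := huk₀.ne'
        have hne2 : (1 - μ₁)⁻¹ * (1 - μ₁) = 1 := inv_mul_cancel₀ h1μ.ne'
        calc (4 * μ₁ * K * D / ‖y' (seq k₀)‖) * (1 - μ₁)⁻¹ * (‖y' (seq k₀)‖ * (1 - μ₁))
            = (4 * μ₁ * K * D / ‖y' (seq k₀)‖) * ‖y' (seq k₀)‖ * ((1 - μ₁)⁻¹ * (1 - μ₁)) := by
              ring
          _ = (4 * μ₁ * K * D / ‖y' (seq k₀)‖) * ‖y' (seq k₀)‖ := by rw [hne2, mul_one]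
          _ = 4 * μ₁ * K * D := div_mul_cancel₀ _ hne1
          _ = (4 * μ₁ * K) * D := by ring
      have h5 : (4 * μ₁ * K) * D < D * (‖y' (seq k₀)‖ * (1 - μ₁)) := by
        calc (4 * μ₁ * K) * D < (‖y' (seq k₀)‖ * (1 - μ₁)) * D :=
              mul_lt_mul_of_pos_right h2 hDpos
          _ = D * (‖y' (seq k₀)‖ * (1 - μ₁)) := mul_comm _ _
      have h6 : (4 * μ₁ * K * D / ‖y' (seq k₀)‖) * (1 - μ₁)⁻¹ * (‖y' (seq k₀)‖ * (1 - μ₁))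
          < D * (‖y' (seq k₀)‖ * (1 - μ₁)) := by rw [h4]; exact h5
      exact lt_of_mul_lt_mul_right h6 hP.le
    linarith
  -- Phase 2 : decay by steps
  have phase2 : ∀ n : ℕ, ∀ t, t₀ + n * r ≤ t → ‖y' t‖ ≤ M * μ ^ n := by
    intro n
    induction n with
    | zero =>
      intro t ht
      simp only [Nat.cast_zero, zero_mul, add_zero] at ht
      simpa using phase1 t ht
    | succ n ih =>
      intro t ht
      have hcast : ((n + 1 : ℕ) : ℝ) = (n : ℝ) + 1 := by push_cast; ring
      rw [hcast] at ht
      have hnr : (0:ℝ) ≤ (n : ℝ) * r := by positivity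
      have ht' : t₀ ≤ t := by nlinarith
      have hincr : ∀ θ ∈ Set.Icc (0:ℝ) r, ‖Y (t - θ) - Y t‖ ≤ θ * (M * μ ^ n) := by
        intro θ hθ
        have h1 : t₀ ≤ t - θ := by nlinarith [hθ.2]
        have h2 : ∀ s ∈ Set.Ico (t - θ) t, ‖y' s‖ ≤ M * μ ^ n := by
          intro s hs
          refine ih s ?_
          have := hs.1
          nlinarith [hθ.2]
        have h3 := hMVT (t - θ) t (M * μ ^ n) h1 (by linarith [hθ.1]) h2
        rw [norm_sub_rev] at h3
        have h4 : t - (t - θ) = θ := by ring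
        rw [h4] at h3
        linarith [mul_comm (M * μ ^ n) θ]
      have h5 := hKPL t ht' (M * μ ^ n) (by positivity) hincr
      calc ‖y' t‖ ≤ μ * (M * μ ^ n) := h5
        _ = M * μ ^ (n + 1) := by ring
  -- the degenerate case μ = 0
  have hZ : μ = 0 → ∀ t, t₀ ≤ t → y' t = 0 := by
    intro hμz t ht
    rw [hID t ht]
    have hnn : 0 ≤ᵐ[(ν t).restrict (Set.Icc 0 r)]
        fun θ => θ * ‖Complex.exp (-(∫ s in (t - θ)..t, lam s))‖ := by
      filter_upwards [ae_restrict_mem measurableSet_Icc] with θ hθ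
      exact mul_nonneg hθ.1 (norm_nonneg _)
    have h0 : (∫ θ in Set.Icc 0 r,
        θ * ‖Complex.exp (-(∫ s in (t - θ)..t, lam s))‖ ∂ν t) = 0 := by
      refine le_antisymm ?_ (integral_nonneg_of_ae hnn)
      exact le_of_le_of_eq (hμ t ht) hμz
    have hae := (MeasureTheory.integral_eq_zero_iff_of_nonneg_ae hnn (hteint t ht)).mp h0
    apply MeasureTheory.integral_eq_zero_of_ae
    filter_upwards [hae] with θ h1
    have hθ0 : θ = 0 := by
      by_contra hne
      have h2 : θ * ‖Complex.exp (-(∫ s in (t - θ)..t, lam s))‖ ≠ 0 :=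
        mul_ne_zero hne (ne_of_gt (hepos t θ))
      exact h2 h1
    subst hθ0
    simp
  -- conclusion
  intro t ht
  rcases eq_or_lt_of_le hμ0 with hμz | hμpos
  · have hy0 : y' t = 0 := hZ hμz.symm t ht
    rw [hy0, norm_zero]
    exact mul_nonneg hM0 (Real.rpow_nonneg hμ0 _)
  · have hdnn : (0:ℝ) ≤ (t - t₀) / r := div_nonneg (by linarith) hr.le
    have hnle : (⌊(t - t₀) / r⌋₊ : ℝ) ≤ (t - t₀) / r := Nat.floor_le hdnn
    have hlt : (t - t₀) / r < ⌊(t - t₀) / r⌋₊ + 1 := Nat.lt_floor_add_one _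
    have h1 : t₀ + (⌊(t - t₀) / r⌋₊ : ℝ) * r ≤ t := by
      have h1a : (⌊(t - t₀) / r⌋₊ : ℝ) * r ≤ t - t₀ := (le_div_iff₀ hr).mp hnle
      linarith
    have h2 := phase2 ⌊(t - t₀) / r⌋₊ t h1
    have h3 : μ ^ ((t - t₀) / r - 1) ≥ μ ^ ((⌊(t - t₀) / r⌋₊ : ℝ)) :=
      Real.rpow_le_rpow_of_exponent_ge hμpos (le_of_lt hμ1) (by linarith)
    calc ‖y' t‖ ≤ M * μ ^ ⌊(t - t₀) / r⌋₊ := h2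
      _ = M * μ ^ ((⌊(t - t₀) / r⌋₊ : ℕ) : ℝ) := by rw [Real.rpow_natCast]
      _ ≤ M * μ ^ ((t - t₀) / r - 1) := mul_le_mul_of_nonneg_left h3 hM0
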